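/- arXiv:2007.08045 — 8 statements merged into one kernel-verified Lean document; each statement's English description precedes it below -/
import Mathlib

section
/- For a finite coalition T of agents with destinations x_a > 0 and a taxi of capacity q with |T| ≤ q, the sum of the Shapley-value payments of the agents in T equals the cost of the taxi, i.e., ∑_{b∈T} φ(T, x_b) = max_{a∈T} x_a, where φ(T,x) = ∫_0^x dr / n_T(r) and n_T(r) = |{a ∈ T : x_a ≥ r}|. -/
open Finset MeasureTheory ENNReal

/-- Number of agents in coalition `T` whose destination is at least `r`. -/
noncomputable def nT (xd : ℕ → ℝ) (T : Finset ℕ) (r : ℝ) : ℕ := (T.filter fun a => r ≤ xd a).card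

/-- Shapley cost share of a passenger dropping at `y` in coalition `T`
(`∞` when `n_T` vanishes on part of `(0,y]`). -/
noncomputable def phi (xd : ℕ → ℝ) (T : Finset ℕ) (y : ℝ) : ℝ≥0∞ :=
  ∫⁻ r in Set.Ioc (0:ℝ) y, (nT xd T r : ℝ≥0∞)⁻¹

/-- Cost share including the capacity constraint of the taxi. -/
noncomputable def taxiCost (xd : ℕ → ℝ) (q : ℕ) (T : Finset ℕ) (y : ℝ) : ℝ≥0∞ :=
  if T.card ≤ q then phi xd T y else ⊤

lemma nT_measurable (xd : ℕ → ℝ) (T : Finset ℕ) : Measurable (nT xd T) := by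
  have : nT xd T = fun r => ∑ a ∈ T, if r ≤ xd a then 1 else 0 := by
    funext r
    rw [nT, Finset.card_filter]
  rw [this]
  exact Finset.measurable_sum _ fun a _ =>
    Measurable.ite measurableSet_Iic measurable_const measurable_const

/-- the Shapley-value payments of the members of a coalition `T`
(with `|T| ≤ q`) sum up to the cost of the taxi, i.e. the furthest destination. -/
theorem stmt0 (xd : ℕ → ℝ) (T : Finset ℕ) (hT : T.Nonempty)
    (hpos : ∀ a ∈ T, 0 < xd a) (q : ℕ) (hq : T.card ≤ q) :
    ∑ b ∈ T, phi xd T (xd b) = ENNReal.ofReal (T.sup' hT xd) := by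
  set M := T.sup' hT xd with hM
  obtain ⟨a0, ha0, ha0M⟩ := T.exists_mem_eq_sup' hT xd
  set f : ℝ → ℝ≥0∞ := fun r => (nT xd T r : ℝ≥0∞)⁻¹ with hf
  have hfm : Measurable f :=
    (measurable_from_top.comp (nT_measurable xd T) :
      Measurable fun r => ((nT xd T r : ℕ) : ℝ≥0∞)).inv
  have key : ∀ r : ℝ, ∑ b ∈ T, (Set.Ioc (0:ℝ) (xd b)).indicator f r
      = (Set.Ioc (0:ℝ) M).indicator 1 r := by
    intro r
    by_cases hr : r ∈ Set.Ioc (0:ℝ) M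
    · obtain ⟨hr0, hrM⟩ := hr
      have hsum : ∑ b ∈ T, (Set.Ioc (0:ℝ) (xd b)).indicator f r
          = ∑ b ∈ T.filter (fun b => r ≤ xd b), f r := by
        rw [Finset.sum_filter]
        refine Finset.sum_congr rfl fun b _ => ?_
        by_cases hb : r ≤ xd b
        · simp [Set.indicator_of_mem, Set.mem_Ioc, hr0, hb]
        · simp [Set.indicator_of_notMem, Set.mem_Ioc, hb]
      rw [hsum, Finset.sum_const, Set.indicator_of_mem (Set.mem_Ioc.mpr ⟨hr0, hrM⟩) (1 : ℝ → ℝ≥0∞)]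
      have hne : nT xd T r ≠ 0 := by
        have : a0 ∈ T.filter (fun b => r ≤ xd b) := by
          simp [ha0, ← ha0M, hrM]
          exact ⟨a0, ha0, le_of_le_of_eq hrM ha0M⟩
        simp only [nT]
        exact Finset.card_ne_zero_of_mem this
      show (nT xd T r) • f r = 1
      rw [nsmul_eq_mul, hf]
      exact ENNReal.mul_inv_cancel (by exact_mod_cast hne) (ENNReal.natCast_ne_top _)
    · rw [Set.indicator_of_notMem hr]
      refine Finset.sum_eq_zero fun b hb => ?_
      have hnm : r ∉ Set.Ioc (0:ℝ) (xd b) := fun hmem =>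
        hr ⟨hmem.1, hmem.2.trans (Finset.le_sup' xd hb)⟩
      exact Set.indicator_of_notMem hnm f
  calc ∑ b ∈ T, phi xd T (xd b)
      = ∑ b ∈ T, ∫⁻ r, (Set.Ioc (0:ℝ) (xd b)).indicator f r := by
        refine Finset.sum_congr rfl fun b _ => ?_
        exact (lintegral_indicator measurableSet_Ioc f).symm
    _ = ∫⁻ r, ∑ b ∈ T, (Set.Ioc (0:ℝ) (xd b)).indicator f r := by
        rw [lintegral_finset_sum]
        exact fun b _ => hfm.indicator measurableSet_Ioc
    _ = ∫⁻ r, (Set.Ioc (0:ℝ) M).indicator 1 r := by simp_rw [key]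
    _ = ENNReal.ofReal M := by
        rw [lintegral_indicator_one measurableSet_Ioc, Real.volume_Ioc, sub_zero]
end

section
/- Let T = {a_1,…,a_t} be a coalition with x_{a_1} ≤ … ≤ x_{a_t} and t ≤ q. Then for each i, the Shapley value of agent a_i in the cooperative cost game c(S) = max_{a∈S} x_a (with c(∅)=0) equals ∑_{j=1}^{i} (x_{a_j} − x_{a_{j−1}}) / (t − j + 1), where x_{a_0} = 0. Equivalently, the Shapley value of a_i equals φ(T, x_{a_i}) = ∫_0^{x_{a_i}} dr / n_T(r). -/
open Finset MeasureTheory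

/-- Cost of a sub-coalition: the largest destination among its members (0 for ∅). -/
noncomputable def cmax {t : ℕ} (x : Fin t → ℝ) (S : Finset (Fin t)) : ℝ :=
  if h : S.Nonempty then S.sup' h x else 0

/-- The Shapley value of agent `i` in the cooperative cost game `c S = max_{a∈S} x a`. -/
noncomputable def shapley {t : ℕ} (x : Fin t → ℝ) (i : Fin t) : ℝ :=
  (t.factorial : ℝ)⁻¹ * ∑ π : Equiv.Perm (Fin t),
    (cmax x (Finset.univ.filter fun b => π b ≤ π i) -
      cmax x ((Finset.univ.filter fun b => π b ≤ π i).erase i))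

/-- Destination of the predecessor of agent `j` (with `x_{a_0} = 0`). -/
noncomputable def prevx {t : ℕ} (x : Fin t → ℝ) (j : Fin t) : ℝ :=
  if j.val = 0 then 0 else x ⟨j.val - 1, lt_of_le_of_lt (Nat.pred_le _) j.isLt⟩

lemma prevx_zero {t : ℕ} (x : Fin t → ℝ) (h : 0 < t) : prevx x ⟨0, h⟩ = 0 := by
  simp [prevx]

lemma prevx_succ {t k : ℕ} (x : Fin t → ℝ) (h : k + 1 < t) :
    prevx x ⟨k + 1, h⟩ = x ⟨k, by omega⟩ := by
  simp [prevx]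

lemma prevx_le {t : ℕ} (x : Fin t → ℝ) (hpos : ∀ i, 0 < x i) (hmono : Monotone x)
    (j : Fin t) : prevx x j ≤ x j := by
  unfold prevx
  split
  · exact (hpos j).le
  · exact hmono (by simp only [Fin.le_def]; omega)

lemma Iic_mk_zero {t : ℕ} (h : 0 < t) :
    Finset.Iic (⟨0, h⟩ : Fin t) = {⟨0, h⟩} := by
  ext j
  simp [Fin.le_def, Fin.ext_iff]

lemma Iic_mk_succ {t k : ℕ} (h : k + 1 < t) :
    Finset.Iic (⟨k + 1, h⟩ : Fin t)
      = insert ⟨k + 1, h⟩ (Finset.Iic (⟨k, by omega⟩ : Fin t)) := by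
  ext j
  simp only [Finset.mem_Iic, Finset.mem_insert, Fin.le_def, Fin.ext_iff]
  omega

lemma cmax_spec {t : ℕ} (x : Fin t → ℝ) (S : Finset (Fin t)) :
    cmax x S = 0 ∨ ∃ b ∈ S, x b = cmax x S := by
  unfold cmax
  by_cases h : S.Nonempty
  · rw [dif_pos h]
    right
    obtain ⟨b, hb, hb2⟩ := Finset.exists_mem_eq_sup' h x
    exact ⟨b, hb, hb2.symm⟩
  · rw [dif_neg h]
    left; rfl

lemma le_cmax {t : ℕ} (x : Fin t → ℝ) {S : Finset (Fin t)} {b : Fin t} (hb : b ∈ S) :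
    x b ≤ cmax x S := by
  unfold cmax
  rw [dif_pos ⟨b, hb⟩]
  exact Finset.le_sup' x hb

lemma cmax_eq_max {t : ℕ} (x : Fin t → ℝ) (hpos : ∀ i, 0 < x i) {S : Finset (Fin t)}
    {i : Fin t} (hi : i ∈ S) : cmax x S = max (x i) (cmax x (S.erase i)) := by
  by_cases h : (S.erase i).Nonempty
  · have hins : cmax x (insert i (S.erase i)) = x i ⊔ cmax x (S.erase i) := by
      unfold cmax
      rw [dif_pos h, dif_pos ⟨i, Finset.mem_insert_self i _⟩]
      exact Finset.sup'_insert (H := h) (f := x)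
    conv_lhs => rw [← Finset.insert_erase hi]
    rw [hins]
  · have hS : S = {i} := by
      ext b
      simp only [Finset.mem_singleton]
      constructor
      · intro hb
        by_contra hne
        exact h ⟨b, Finset.mem_erase.2 ⟨hne, hb⟩⟩
      · rintro rfl; exact hi
    rw [hS]
    unfold cmax
    rw [dif_pos ⟨i, Finset.mem_singleton_self i⟩, dif_neg (by simp)]
    rw [Finset.sup'_singleton]
    exact (max_eq_left (hpos i).le).symm

lemma tele {t : ℕ} (x : Fin t → ℝ) (hpos : ∀ i, 0 < x i) (hmono : Monotone x)
    (M : ℝ) (hM : M = 0 ∨ ∃ b, x b = M) :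
    ∀ k (hk : k < t),
      ∑ j ∈ Finset.Iic (⟨k, hk⟩ : Fin t),
        (x j - prevx x j) * (if M < x j then 1 else 0)
      = max (x ⟨k, hk⟩) M - M := by
  intro k
  induction k with
  | zero =>
    intro hk
    rw [Iic_mk_zero hk, Finset.sum_singleton, prevx_zero x hk]
    by_cases hMx : M < x ⟨0, hk⟩
    · have hM0 : M = 0 := by
        rcases hM with h | ⟨b, hb⟩
        · exact h
        · exfalso
          have : x ⟨0, hk⟩ ≤ x b := hmono (by simp [Fin.le_def])
          rw [hb] at this
          exact absurd hMx (not_lt.2 this)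
      rw [if_pos hMx, hM0, max_eq_left (hpos _).le]
      ring
    · rw [if_neg hMx, max_eq_right (not_lt.1 hMx)]
      ring
  | succ k ih =>
    intro hk
    have hk' : k < t := by omega
    have hle : x ⟨k, hk'⟩ ≤ x ⟨k + 1, hk⟩ := hmono (by simp [Fin.le_def])
    have hnotmem : (⟨k + 1, hk⟩ : Fin t) ∉ Finset.Iic (⟨k, hk'⟩ : Fin t) := by
      simp [Fin.le_def]
    rw [Iic_mk_succ hk, Finset.sum_insert hnotmem, ih hk', prevx_succ x hk]
    by_cases h1 : M < x ⟨k + 1, hk⟩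
    · by_cases h2 : M < x ⟨k, hk'⟩
      · rw [if_pos h1, max_eq_left h2.le, max_eq_left (h1.le)]
        ring
      · have hMeq : M = x ⟨k, hk'⟩ := by
          rcases hM with h | ⟨b, hb⟩
          · exfalso; rw [h] at h2; exact h2 (hpos _)
          · have hcase : b.val ≤ k ∨ k + 1 ≤ b.val := by omega
            rcases hcase with hc | hc
            · have : x b ≤ x ⟨k, hk'⟩ := hmono (by simp [Fin.le_def, hc])
              rw [hb] at this
              exact le_antisymm this (not_lt.1 h2)
            · exfalso
              have : x ⟨k + 1, hk⟩ ≤ x b := hmono (by simp [Fin.le_def, hc])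
              rw [hb] at this
              exact absurd h1 (not_lt.2 this)
        rw [if_pos h1, hMeq, max_self, max_eq_left hle]
        ring
    · have h2 : ¬ M < x ⟨k, hk'⟩ := fun hc => h1 (lt_of_lt_of_le hc hle)
      rw [if_neg h1, max_eq_right (not_lt.1 h2), max_eq_right (not_lt.1 h1)]
      ring

lemma marg_eq {t : ℕ} (x : Fin t → ℝ) (hpos : ∀ i, 0 < x i) (hmono : Monotone x)
    (i : Fin t) (π : Equiv.Perm (Fin t)) :
    cmax x (Finset.univ.filter fun b => π b ≤ π i) -
      cmax x ((Finset.univ.filter fun b => π b ≤ π i).erase i)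
    = ∑ j ∈ Finset.Iic i,
        (x j - prevx x j) * (if ∀ b, x j ≤ x b → π i ≤ π b then 1 else 0) := by
  classical
  set S : Finset (Fin t) := Finset.univ.filter fun b => π b ≤ π i with hS
  have hiS : i ∈ S := by simp [hS]
  set M : ℝ := cmax x (S.erase i) with hMdef
  have hM : M = 0 ∨ ∃ b, x b = M := by
    rcases cmax_spec x (S.erase i) with h | ⟨b, hb, hb2⟩
    · left; exact h
    · right; exact ⟨b, hb2⟩
  have h1 : cmax x S = max (x i) M := cmax_eq_max x hpos hiS
  have h2 : ∀ j : Fin t, ((∀ b, x j ≤ x b → π i ≤ π b) ↔ M < x j) := by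
    intro j
    constructor
    · intro hcond
      by_contra hlt
      push_neg at hlt
      rcases cmax_spec x (S.erase i) with h | ⟨b, hb, hb2⟩
      · rw [← hMdef] at h
        rw [h] at hlt
        linarith [hpos j]
      · rw [← hMdef] at hb2
        have hxb : x j ≤ x b := by rw [hb2]; exact hlt
        have := hcond b hxb
        rw [Finset.mem_erase, hS, Finset.mem_filter] at hb
        have hb2' : π b ≤ π i := hb.2.2
        have : π b = π i := le_antisymm hb2' this
        exact hb.1 (EquivLike.injective π this)
    · intro hlt b hxb
      by_contra hni
      push_neg at hni
      have hbne : b ≠ i := by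
        rintro rfl; exact absurd hni (lt_irrefl _)
      have hbS : b ∈ S.erase i := by
        rw [Finset.mem_erase, hS, Finset.mem_filter]
        exact ⟨hbne, Finset.mem_univ b, hni.le⟩
      have : x b ≤ M := le_cmax x hbS
      linarith
  have hsum : ∀ j : Fin t,
      (x j - prevx x j) * (if ∀ b, x j ≤ x b → π i ≤ π b then (1:ℝ) else 0)
      = (x j - prevx x j) * (if M < x j then 1 else 0) := by
    intro j
    congr 1
    simp only [h2 j]
  rw [h1, ← Fin.eta i i.isLt, ← tele x hpos hmono M hM i.val i.isLt]
  exact (Finset.sum_congr rfl fun j _ => (hsum j)).symm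

lemma card_Bj {t : ℕ} (x : Fin t → ℝ) (hpos : ∀ i, 0 < x i) (hmono : Monotone x)
    (j : Fin t) (hlt : prevx x j < x j) :
    (Finset.univ.filter fun b : Fin t => x j ≤ x b).card = t - j.val := by
  have hfe : (Finset.univ.filter fun b : Fin t => x j ≤ x b) = Finset.Ici j := by
    ext b
    simp only [Finset.mem_filter, Finset.mem_univ, true_and, Finset.mem_Ici]
    constructor
    · intro hxb
      by_contra hb
      have hbj : b.val < j.val := by
        rw [Fin.le_def] at hb; omega
      have hj0 : j.val ≠ 0 := by omega
      have hble : x b ≤ prevx x j := by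
        unfold prevx
        rw [if_neg hj0]
        exact hmono (by simp only [Fin.le_def]; omega)
      linarith
    · intro hb
      exact hmono hb
  rw [hfe, Fin.card_Ici]

lemma count_perm {t : ℕ} (B : Finset (Fin t)) (i : Fin t) (hi : i ∈ B) :
    B.card * (Finset.univ.filter fun π : Equiv.Perm (Fin t) => ∀ b ∈ B, π i ≤ π b).card
      = t.factorial := by
  classical
  set P : Fin t → Finset (Equiv.Perm (Fin t)) :=
    fun a => Finset.univ.filter fun π => ∀ b ∈ B, π a ≤ π b with hP
  have hmem : ∀ a (π : Equiv.Perm (Fin t)), π ∈ P a ↔ ∀ b ∈ B, π a ≤ π b := by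
    intro a π; simp [hP]
  have key : ∀ a (π : Equiv.Perm (Fin t)),
      (Equiv.swap (π a) (π i) * π) a = π i ∧ (Equiv.swap (π a) (π i) * π) i = π a := by
    intro a π
    constructor
    · simp [Equiv.Perm.mul_apply]
    · simp [Equiv.Perm.mul_apply]
  have hinv : ∀ a (π : Equiv.Perm (Fin t)),
      Equiv.swap ((Equiv.swap (π a) (π i) * π) a) ((Equiv.swap (π a) (π i) * π) i) *
        (Equiv.swap (π a) (π i) * π) = π := by
    intro a π
    rw [(key a π).1, (key a π).2, Equiv.swap_comm, ← mul_assoc, Equiv.swap_mul_self, one_mul]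
  have hcards : ∀ a ∈ B, (P a).card = (P i).card := by
    intro a ha
    refine Finset.card_nbij' (i := fun π => Equiv.swap (π a) (π i) * π)
      (j := fun π => Equiv.swap (π a) (π i) * π) ?_ ?_ ?_ ?_
    · intro π hπ
      simp only [Finset.mem_coe] at hπ ⊢
      rw [hmem] at hπ ⊢
      intro b hb
      rw [(key a π).2]
      rcases eq_or_ne (π b) (π a) with h | h
      · simp only [Equiv.Perm.mul_apply, h, Equiv.swap_apply_left]
        exact hπ i hi
      · rcases eq_or_ne (π b) (π i) with h2 | h2
        · simp [Equiv.Perm.mul_apply, h2, Equiv.swap_apply_right]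
        · simp only [Equiv.Perm.mul_apply, Equiv.swap_apply_of_ne_of_ne h h2]
          exact hπ b hb
    · intro π hπ
      simp only [Finset.mem_coe] at hπ ⊢
      rw [hmem] at hπ ⊢
      intro b hb
      rw [(key a π).1]
      rcases eq_or_ne (π b) (π a) with h | h
      · simp [Equiv.Perm.mul_apply, h, Equiv.swap_apply_left]
      · rcases eq_or_ne (π b) (π i) with h2 | h2
        · simp only [Equiv.Perm.mul_apply, h2, Equiv.swap_apply_right]
          exact hπ a ha
        · simp only [Equiv.Perm.mul_apply, Equiv.swap_apply_of_ne_of_ne h h2]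
          exact hπ b hb
    · intro π _; exact hinv a π
    · intro π _; exact hinv a π
  have hcover : (Finset.univ : Finset (Equiv.Perm (Fin t))) = B.biUnion P := by
    ext π
    simp only [Finset.mem_univ, true_iff, Finset.mem_biUnion]
    obtain ⟨a, ha, hmin⟩ := B.exists_min_image π ⟨i, hi⟩
    exact ⟨a, ha, (hmem a π).2 hmin⟩
  have hdisj : (B : Set (Fin t)).PairwiseDisjoint P := by
    intro a ha a' ha' hne
    simp only [Function.onFun]
    rw [Finset.disjoint_left]
    intro π hπa hπa'
    rw [hmem] at hπa hπa'
    exact hne (EquivLike.injective π (le_antisymm (hπa a' ha') (hπa' a ha)))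
  calc B.card * (P i).card = ∑ _a ∈ B, (P i).card := by rw [Finset.sum_const, smul_eq_mul]
    _ = ∑ a ∈ B, (P a).card := Finset.sum_congr rfl fun a ha => (hcards a ha).symm
    _ = (B.biUnion P).card := (Finset.card_biUnion hdisj).symm
    _ = (Finset.univ : Finset (Equiv.Perm (Fin t))).card := by rw [← hcover]
    _ = t.factorial := by simp [Finset.card_univ, Fintype.card_perm]

lemma part1 {t : ℕ} (x : Fin t → ℝ) (hpos : ∀ i, 0 < x i) (hmono : Monotone x)
    (i : Fin t) :
    shapley x i = ∑ j ∈ Finset.Iic i, (x j - prevx x j) / ((t : ℝ) - (j : ℕ)) := by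
  classical
  unfold shapley
  rw [Finset.sum_congr rfl fun π _ => marg_eq x hpos hmono i π]
  rw [Finset.sum_comm, Finset.mul_sum]
  refine Finset.sum_congr rfl fun j hj => ?_
  rw [← Finset.mul_sum, Finset.sum_boole]
  have hji : j ≤ i := Finset.mem_Iic.1 hj
  set B : Finset (Fin t) := Finset.univ.filter fun b => x j ≤ x b with hB
  have hiB : i ∈ B := by
    rw [hB, Finset.mem_filter]
    exact ⟨Finset.mem_univ i, hmono hji⟩
  have hfeq : (Finset.univ.filter fun π : Equiv.Perm (Fin t) => ∀ b, x j ≤ x b → π i ≤ π b)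
      = Finset.univ.filter fun π : Equiv.Perm (Fin t) => ∀ b ∈ B, π i ≤ π b := by
    apply Finset.filter_congr
    intro π _
    simp [hB]
  have hcount := count_perm B i hiB
  have hjt : j.val ≤ t := j.isLt.le
  have hD : (0:ℝ) < (t : ℝ) - (j.val : ℝ) := by
    have : (j.val : ℝ) < (t : ℝ) := by exact_mod_cast j.isLt
    linarith
  rcases eq_or_lt_of_le (prevx_le x hpos hmono j) with heq | hlt
  · rw [heq]
    simp
  · have hBcard : B.card = t - j.val := card_Bj x hpos hmono j hlt
    rw [hBcard] at hcount
    have hcast : ((t - j.val : ℕ) : ℝ) = (t : ℝ) - (j.val : ℝ) := by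
      rw [Nat.cast_sub hjt]
    have hc : ((t : ℝ) - (j.val : ℝ)) *
        ((Finset.univ.filter fun π : Equiv.Perm (Fin t) => ∀ b ∈ B, π i ≤ π b).card : ℝ)
        = (t.factorial : ℝ) := by
      rw [← hcast]
      exact_mod_cast hcount
    rw [hfeq]
    have hfact : (t.factorial : ℝ) ≠ 0 := by
      exact_mod_cast t.factorial_ne_zero
    rw [eq_div_iff hD.ne']
    set C : ℝ := ((Finset.univ.filter fun π : Equiv.Perm (Fin t) => ∀ b ∈ B, π i ≤ π b).card : ℝ)
    field_simp
    nlinarith [hc]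

lemma nval_meas {t : ℕ} (x : Fin t → ℝ) :
    Measurable (fun r : ℝ => ((Finset.univ.filter fun a : Fin t => r ≤ x a).card : ℝ)⁻¹) := by
  have h1 : Measurable (fun r : ℝ => (Finset.univ.filter fun a : Fin t => r ≤ x a).card) := by
    have : (fun r : ℝ => (Finset.univ.filter fun a : Fin t => r ≤ x a).card)
        = fun r : ℝ => ∑ a : Fin t, if r ≤ x a then 1 else 0 := by
      funext r
      rw [Finset.card_filter]
    rw [this]
    apply Finset.measurable_sum
    intro a _
    exact Measurable.ite measurableSet_Iic measurable_const measurable_const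
  exact (measurable_from_top (f := fun k : ℕ => ((k : ℝ))⁻¹)).comp h1

lemma nval_int {t : ℕ} (x : Fin t → ℝ) (a b : ℝ) :
    IntegrableOn (fun r : ℝ => ((Finset.univ.filter fun a : Fin t => r ≤ x a).card : ℝ)⁻¹)
      (Set.Ioc a b) := by
  apply Integrable.mono' (g := fun _ => (1:ℝ))
  · exact integrableOn_const measure_Ioc_lt_top.ne
  · exact (nval_meas x).aestronglyMeasurable.restrict
  · refine Filter.Eventually.of_forall fun r => ?_
    rw [Real.norm_eq_abs, abs_of_nonneg (by positivity)]
    rcases Nat.eq_zero_or_pos (Finset.univ.filter fun a : Fin t => r ≤ x a).card with h | h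
    · rw [h]; norm_num
    · rw [inv_le_one_iff₀]
      right
      exact_mod_cast h

lemma nval_on {t : ℕ} (x : Fin t → ℝ) (hpos : ∀ i, 0 < x i) (hmono : Monotone x)
    (j : Fin t) (r : ℝ) (hr : r ∈ Set.Ioc (prevx x j) (x j)) :
    (Finset.univ.filter fun a : Fin t => r ≤ x a) = Finset.Ici j := by
  obtain ⟨hr1, hr2⟩ := hr
  ext b
  simp only [Finset.mem_filter, Finset.mem_univ, true_and, Finset.mem_Ici]
  constructor
  · intro hxb
    by_contra hb
    have hbj : b.val < j.val := by rw [Fin.le_def] at hb; omega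
    have hj0 : j.val ≠ 0 := by omega
    have hble : x b ≤ prevx x j := by
      unfold prevx
      rw [if_neg hj0]
      exact hmono (by simp only [Fin.le_def]; omega)
    linarith
  · intro hb
    exact le_trans hr2 (hmono hb)

lemma int_piece {t : ℕ} (x : Fin t → ℝ) (hpos : ∀ i, 0 < x i) (hmono : Monotone x)
    (j : Fin t) :
    ∫ r in Set.Ioc (prevx x j) (x j),
        ((Finset.univ.filter fun a : Fin t => r ≤ x a).card : ℝ)⁻¹
      = (x j - prevx x j) / ((t : ℝ) - (j.val : ℕ)) := by
  have hle := prevx_le x hpos hmono j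
  rw [setIntegral_congr_fun (g := fun _ => (((t - j.val : ℕ) : ℝ))⁻¹) measurableSet_Ioc
    (fun r hr => by rw [nval_on x hpos hmono j r hr, Fin.card_Ici])]
  rw [setIntegral_const, Real.volume_real_Ioc_of_le hle, smul_eq_mul]
  rw [Nat.cast_sub j.isLt.le, div_eq_mul_inv]

lemma part2 {t : ℕ} (x : Fin t → ℝ) (hpos : ∀ i, 0 < x i) (hmono : Monotone x) :
    ∀ k (hk : k < t),
      (∫ r in Set.Ioc (0:ℝ) (x ⟨k, hk⟩),
        ((Finset.univ.filter fun a : Fin t => r ≤ x a).card : ℝ)⁻¹)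
      = ∑ j ∈ Finset.Iic (⟨k, hk⟩ : Fin t), (x j - prevx x j) / ((t : ℝ) - (j : ℕ)) := by
  intro k
  induction k with
  | zero =>
    intro hk
    rw [Iic_mk_zero hk, Finset.sum_singleton, ← int_piece x hpos hmono ⟨0, hk⟩,
      prevx_zero x hk]
  | succ k ih =>
    intro hk
    have hk' : k < t := by omega
    have hle : x ⟨k, hk'⟩ ≤ x ⟨k + 1, hk⟩ := hmono (by simp [Fin.le_def])
    have hnotmem : (⟨k + 1, hk⟩ : Fin t) ∉ Finset.Iic (⟨k, hk'⟩ : Fin t) := by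
      simp [Fin.le_def]
    have hsplit : Set.Ioc (0:ℝ) (x ⟨k + 1, hk⟩)
        = Set.Ioc (0:ℝ) (x ⟨k, hk'⟩) ∪ Set.Ioc (x ⟨k, hk'⟩) (x ⟨k + 1, hk⟩) :=
      (Set.Ioc_union_Ioc_eq_Ioc (hpos _).le hle).symm
    rw [hsplit, setIntegral_union (Set.Ioc_disjoint_Ioc_of_le le_rfl) measurableSet_Ioc
      (nval_int x _ _) (nval_int x _ _), ih hk', Iic_mk_succ hk,
      Finset.sum_insert hnotmem]
    have hpiece := int_piece x hpos hmono ⟨k + 1, hk⟩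
    rw [prevx_succ x hk] at hpiece
    rw [hpiece, prevx_succ x hk]
    exact add_comm _ _

/-- for a coalition `{a_1,…,a_t}` sorted by destination with `t ≤ q`,
the Shapley value of agent `a_i` in the game `c S = max_{a∈S} x a` equals
`∑_{j=1}^{i} (x_{a_j} − x_{a_{j−1}})/(t−j+1)`, which also equals
`φ(T, x_{a_i}) = ∫_0^{x_{a_i}} dr / n_T(r)`. -/
theorem stmt1 (t : ℕ) (q : ℕ) (hq : t ≤ q)
    (x : Fin t → ℝ) (hpos : ∀ i, 0 < x i) (hmono : Monotone x) (i : Fin t) :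
    shapley x i =
      ∑ j ∈ Finset.Iic i, (x j - prevx x j) / ((t : ℝ) - (j : ℕ)) ∧
    shapley x i =
      ∫ r in Set.Ioc (0:ℝ) (x i),
        ((Finset.univ.filter fun a : Fin t => r ≤ x a).card : ℝ)⁻¹ := by
  refine ⟨part1 x hpos hmono i, ?_⟩
  rw [part1 x hpos hmono i]
  exact (part2 x hpos hmono i.val i.isLt).symm
end

section
/- (Monotonicity lemma) Let 𝒯 be an envy-free feasible allocation and T, T' ∈ 𝒯 be nonempty coalitions. If min_{a∈T} x_a < min_{a'∈T'} x_{a'} then |T| ≥ |T'|; and if min_{a∈T} x_a = min_{a'∈T'} x_{a'} then |T| = |T'|. -/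
open Finset MeasureTheory ENNReal

/-- `Tl` is a partition of the agent set `A` into the (possibly empty) coalitions
of the `k` taxis. -/
def IsPartition (A : Finset ℕ) {k : ℕ} (Tl : Fin k → Finset ℕ) : Prop :=
  (∀ i j, i ≠ j → Disjoint (Tl i) (Tl j)) ∧ Finset.univ.biUnion Tl = A

/-- Feasibility: each coalition respects the capacity of its taxi. -/
def Feasible {k : ℕ} (q : Fin k → ℕ) (Tl : Fin k → Finset ℕ) : Prop :=
  ∀ i, (Tl i).card ≤ q i

/-- Envy-freeness: no agent `a` can lower her cost by replacing an agent `b`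
of another taxi. -/
def EnvyFree (xd : ℕ → ℝ) {k : ℕ} (q : Fin k → ℕ) (Tl : Fin k → Finset ℕ) : Prop :=
  ∀ i j, i ≠ j → ∀ a ∈ Tl i, ∀ b ∈ Tl j,
    taxiCost xd (q i) (Tl i) (xd a) ≤ taxiCost xd (q j) ((Tl j).erase b ∪ {a}) (xd a)

lemma phi_const (xd : ℕ → ℝ) (T : Finset ℕ) (y : ℝ)
    (h : ∀ c ∈ T, y ≤ xd c) :
    phi xd T y = (T.card : ℝ≥0∞)⁻¹ * ENNReal.ofReal y := by
  unfold phi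
  have hcong : ∀ r ∈ Set.Ioc (0:ℝ) y, ((nT xd T r : ℝ≥0∞))⁻¹ = (T.card : ℝ≥0∞)⁻¹ := by
    intro r hr
    have : nT xd T r = T.card := by
      unfold nT
      congr 1
      exact Finset.filter_true_of_mem (fun c hc => hr.2.trans (h c hc))
    rw [this]
  rw [setLIntegral_congr_fun measurableSet_Ioc (fun r hr => hcong r hr),
    setLIntegral_const, Real.volume_Ioc, sub_zero]

lemma key (A : Finset ℕ) (xd : ℕ → ℝ) (hpos : ∀ a ∈ A, 0 < xd a)
    {k : ℕ} (q : Fin k → ℕ) (Tl : Fin k → Finset ℕ)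
    (hpart : IsPartition A Tl) (hfeas : Feasible q Tl) (hef : EnvyFree xd q Tl)
    (i j : Fin k) (hij : i ≠ j) (hi : (Tl i).Nonempty) (hj : (Tl j).Nonempty)
    (hle : (Tl i).inf' hi xd ≤ (Tl j).inf' hj xd) : (Tl j).card ≤ (Tl i).card := by
  obtain ⟨a, ha, hxa⟩ := Finset.exists_mem_eq_inf' hi xd
  obtain ⟨b, hb⟩ := hj
  have haA : a ∈ A := by
    rw [← hpart.2]; exact Finset.mem_biUnion.2 ⟨i, Finset.mem_univ i, ha⟩
  have hx0 : 0 < xd a := hpos a haA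
  have hanj : a ∉ Tl j := fun h =>
    (Finset.disjoint_left.1 (hpart.1 i j hij) ha) h
  have hcardT' : ((Tl j).erase b ∪ {a}).card = (Tl j).card := by
    rw [Finset.card_union_of_disjoint (by simp [Finset.mem_erase, hanj]),
      Finset.card_erase_of_mem hb, Finset.card_singleton]
    exact Nat.succ_pred_eq_of_pos (Finset.card_pos.2 ⟨b, hb⟩)
  have hef' := hef i j hij a ha b hb
  rw [taxiCost, taxiCost, if_pos (hfeas i), if_pos (hcardT' ▸ hfeas j)] at hef'
  have h1 : phi xd (Tl i) (xd a) = ((Tl i).card : ℝ≥0∞)⁻¹ * ENNReal.ofReal (xd a) := by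
    apply phi_const
    intro c hc
    rw [← hxa]; exact Finset.inf'_le xd hc
  have h2 : phi xd ((Tl j).erase b ∪ {a}) (xd a)
      = (((Tl j).erase b ∪ {a}).card : ℝ≥0∞)⁻¹ * ENNReal.ofReal (xd a) := by
    apply phi_const
    intro c hc
    rcases Finset.mem_union.1 hc with hc | hc
    · calc xd a ≤ (Tl j).inf' ⟨b, hb⟩ xd := hxa ▸ hle
        _ ≤ xd c := Finset.inf'_le xd (Finset.mem_of_mem_erase hc)
    · rw [Finset.mem_singleton.1 hc]
  rw [h1, h2, hcardT'] at hef'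
  have hinv : ((Tl i).card : ℝ≥0∞)⁻¹ ≤ ((Tl j).card : ℝ≥0∞)⁻¹ :=
    (ENNReal.mul_le_mul_iff_left (by simpa using hx0) ENNReal.ofReal_ne_top).1 hef'
  exact_mod_cast ENNReal.inv_le_inv.1 hinv

/-- Monotonicity lemma: in an envy-free feasible allocation, an earlier
first drop-off point means a (weakly) larger coalition, and equal first drop-off
points mean equal sizes. -/
theorem stmt3 (A : Finset ℕ) (xd : ℕ → ℝ) (hpos : ∀ a ∈ A, 0 < xd a)
    (k : ℕ) (q : Fin k → ℕ) (hq : ∀ i j : Fin k, i ≤ j → q j ≤ q i)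
    (Tl : Fin k → Finset ℕ)
    (hpart : IsPartition A Tl) (hfeas : Feasible q Tl) (hef : EnvyFree xd q Tl)
    (i j : Fin k) (hi : (Tl i).Nonempty) (hj : (Tl j).Nonempty) :
    ((Tl i).inf' hi xd < (Tl j).inf' hj xd → (Tl j).card ≤ (Tl i).card) ∧
    ((Tl i).inf' hi xd = (Tl j).inf' hj xd → (Tl i).card = (Tl j).card) := by
  by_cases hij : i = j
  · subst hij
    exact ⟨fun h => (lt_irrefl _ h).elim, fun _ => rfl⟩
  · constructor
    · intro h
      exact key A xd hpos q Tl hpart hfeas hef i j hij hi hj h.le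
    · intro h
      exact le_antisymm
        (key A xd hpos q Tl hpart hfeas hef j i (Ne.symm hij) hj hi h.ge)
        (key A xd hpos q Tl hpart hfeas hef i j hij hi hj h.le)
end

section
/- (Split lemma, part iii) Let 𝒯 be an envy-free feasible allocation with distinct coalitions T, T' each containing agents of type x, no agents of type < x, and |T| = |T'|. If the number of type-x agents in T equals that in T', then T and T' consist entirely of type-x agents, i.e., T = T_{=x} and T' = T'_{=x}. -/
open Finset MeasureTheory ENNReal

/-- `n_T` is constant equal to `|T|` below the minimum destination. -/
lemma nT_const_low (xd : ℕ → ℝ) (S : Finset ℕ) {x : ℝ}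
    (hS : ∀ d ∈ S, x ≤ xd d) {r : ℝ} (hr : r ∈ Set.Ioc (0:ℝ) x) :
    nT xd S r = S.card := by
  unfold nT
  rw [filter_true_of_mem fun d hd => le_trans hr.2 (hS d hd)]

/-- `n_T` on `(x, y]` when every destination is `≥ x` and destinations `> x` are `≥ y`. -/
lemma nT_const_high (xd : ℕ → ℝ) (S : Finset ℕ) {x y : ℝ}
    (hS2 : ∀ d ∈ S, x < xd d → y ≤ xd d) {r : ℝ} (hr : r ∈ Set.Ioc x y) :
    nT xd S r = (S.filter fun d => x < xd d).card := by
  unfold nT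
  congr 1
  apply filter_congr
  intro d hd
  constructor
  · intro h; exact lt_of_lt_of_le hr.1 h
  · intro h; exact le_trans hr.2 (hS2 d hd h)

/-- Piecewise-constant computation of `phi`. -/
lemma phi_eq (xd : ℕ → ℝ) (T : Finset ℕ) {x y : ℝ} (hx : 0 < x) (hxy : x ≤ y)
    (n1 n2 : ℕ) (h1 : ∀ r ∈ Set.Ioc (0:ℝ) x, nT xd T r = n1)
    (h2 : ∀ r ∈ Set.Ioc x y, nT xd T r = n2) :
    phi xd T y = ENNReal.ofReal x * (n1 : ℝ≥0∞)⁻¹ + ENNReal.ofReal (y - x) * (n2 : ℝ≥0∞)⁻¹ := by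
  unfold phi
  rw [← Set.Ioc_union_Ioc_eq_Ioc hx.le hxy,
    lintegral_union measurableSet_Ioc (Set.Ioc_disjoint_Ioc_of_le le_rfl)]
  congr 1
  · rw [setLIntegral_congr_fun measurableSet_Ioc
      (fun r hr => by rw [h1 r hr]),
      setLIntegral_const, Real.volume_Ioc, sub_zero, mul_comm]
  · rw [setLIntegral_congr_fun measurableSet_Ioc
      (fun r hr => by rw [h2 r hr]),
      setLIntegral_const, Real.volume_Ioc, mul_comm]

/-- Key step: an agent `c` with minimal destination strictly above `x` would envy
a type-`x` agent `b` of the other coalition. -/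
lemma key_contra {k : ℕ} (xd : ℕ → ℝ) (q : Fin k → ℕ) (Tl : Fin k → Finset ℕ)
    (hdisj : ∀ i j, i ≠ j → Disjoint (Tl i) (Tl j))
    (hfeas : Feasible q Tl) (hef : EnvyFree xd q Tl)
    (i j : Fin k) (hij : i ≠ j) (x : ℝ) (hx : 0 < x) (b c : ℕ)
    (hb : b ∈ Tl j) (hbx : xd b = x) (hc : c ∈ Tl i) (hcx : x < xd c)
    (hlo1 : ∀ d ∈ Tl i, x ≤ xd d) (hlo2 : ∀ d ∈ Tl j, x ≤ xd d)
    (hmin : ∀ d, (d ∈ Tl i ∨ d ∈ Tl j) → x < xd d → xd c ≤ xd d)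
    (hcard : (Tl i).card = (Tl j).card)
    (hsplit : ((Tl i).filter fun d => xd d = x).card
            = ((Tl j).filter fun d => xd d = x).card) : False := by
  set y := xd c with hy
  set n := (Tl i).card with hn
  set m := ((Tl i).filter fun d => xd d = x).card with hm
  have hcT' : c ∉ Tl j := Finset.disjoint_left.mp (hdisj i j hij) hc
  set S := (Tl j).erase b ∪ {c} with hS
  have hcS : c ∉ (Tl j).erase b := fun h => hcT' (Finset.mem_of_mem_erase h)
  have hT'pos : 0 < (Tl j).card := Finset.card_pos.mpr ⟨b, hb⟩
  have hScard : S.card = (Tl j).card := by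
    rw [hS, Finset.card_union_of_disjoint (by simpa using hcS),
      Finset.card_erase_of_mem hb, Finset.card_singleton]
    omega
  -- filter computations
  have hfi : ((Tl i).filter fun d => x < xd d).card = n - m := by
    have heq : ((Tl i).filter fun d => x < xd d) = (Tl i).filter fun d => ¬ xd d = x := by
      apply filter_congr
      intro d hd
      constructor
      · intro h; exact ne_of_gt h
      · intro h; exact lt_of_le_of_ne (hlo1 d hd) (Ne.symm h)
    rw [heq, filter_not, Finset.card_sdiff_of_subset (filter_subset _ _)]
  have hfj : ((Tl j).filter fun d => x < xd d).card = n - m := by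
    have heq : ((Tl j).filter fun d => x < xd d) = (Tl j).filter fun d => ¬ xd d = x := by
      apply filter_congr
      intro d hd
      constructor
      · intro h; exact ne_of_gt h
      · intro h; exact lt_of_le_of_ne (hlo2 d hd) (Ne.symm h)
    rw [heq, filter_not, Finset.card_sdiff_of_subset (filter_subset _ _), ← hcard, ← hsplit]
  have hmn : m < n := by
    have hss : ((Tl i).filter fun d => xd d = x) ⊂ Tl i :=
      (Finset.ssubset_iff_of_subset (filter_subset _ _)).mpr
        ⟨c, hc, by simp only [Finset.mem_filter, not_and]; exact fun _ => ne_of_gt hcx⟩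
    exact Finset.card_lt_card hss
  have hnpos : 0 < n := lt_of_le_of_lt (Nat.zero_le m) hmn
  -- properties of S
  have hSlo : ∀ d ∈ S, x ≤ xd d := by
    intro d hd
    rcases Finset.mem_union.mp hd with h | h
    · exact hlo2 d (Finset.mem_of_mem_erase h)
    · rw [Finset.mem_singleton.mp h]; exact hcx.le
  have hShi : ∀ d ∈ S, x < xd d → y ≤ xd d := by
    intro d hd hdx
    rcases Finset.mem_union.mp hd with h | h
    · exact hmin d (Or.inr (Finset.mem_of_mem_erase h)) hdx
    · rw [Finset.mem_singleton.mp h]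
  have hThi : ∀ d ∈ Tl i, x < xd d → y ≤ xd d := fun d hd => hmin d (Or.inl hd)
  have hfS : (S.filter fun d => x < xd d).card = n - m + 1 := by
    rw [hS, filter_union, filter_erase, filter_singleton, if_pos hcx]
    have hbnot : b ∉ (Tl j).filter fun d => x < xd d := by
      simp [hbx]
    rw [Finset.erase_eq_of_notMem hbnot,
      Finset.card_union_of_disjoint (by
        simp only [Finset.disjoint_singleton_right, Finset.mem_filter]
        exact fun h => hcT' h.1),
      Finset.card_singleton, hfj]
  -- compute the two costs
  have hphiT : phi xd (Tl i) y
      = ENNReal.ofReal x * (n : ℝ≥0∞)⁻¹ + ENNReal.ofReal (y - x) * ((n - m : ℕ) : ℝ≥0∞)⁻¹ :=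
    phi_eq xd (Tl i) hx hcx.le n (n - m)
      (fun r hr => nT_const_low xd (Tl i) hlo1 hr)
      (fun r hr => by rw [nT_const_high xd (Tl i) hThi hr, hfi])
  have hphiS : phi xd S y
      = ENNReal.ofReal x * (n : ℝ≥0∞)⁻¹ + ENNReal.ofReal (y - x) * ((n - m + 1 : ℕ) : ℝ≥0∞)⁻¹ :=
    phi_eq xd S hx hcx.le n (n - m + 1)
      (fun r hr => by rw [nT_const_low xd S hSlo hr, hScard, hcard])
      (fun r hr => by rw [nT_const_high xd S hShi hr, hfS])
  -- envy-freeness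
  have hef' := hef i j hij c hc b hb
  rw [show ((Tl j).erase b ∪ {c}) = S from rfl] at hef'
  unfold taxiCost at hef'
  rw [if_pos (hfeas i), if_pos (by rw [hScard]; exact hfeas j), hphiT, hphiS] at hef'
  -- contradiction
  have hAne : ENNReal.ofReal x * (n : ℝ≥0∞)⁻¹ ≠ ⊤ :=
    ENNReal.mul_ne_top ENNReal.ofReal_ne_top
      (ENNReal.inv_ne_top.mpr (Nat.cast_ne_zero.mpr hnpos.ne'))
  have hBlt : ENNReal.ofReal (y - x) * ((n - m + 1 : ℕ) : ℝ≥0∞)⁻¹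
      < ENNReal.ofReal (y - x) * ((n - m : ℕ) : ℝ≥0∞)⁻¹ := by
    exact ENNReal.mul_lt_mul_right (ENNReal.ofReal_pos.mpr (by linarith)).ne'
      ENNReal.ofReal_ne_top
      (ENNReal.inv_lt_inv.mpr (show ((n - m : ℕ) : ℝ≥0∞) < ((n - m + 1 : ℕ) : ℝ≥0∞) by exact_mod_cast Nat.lt_succ_self (n - m)))
  exact absurd hef' (not_le.mpr (ENNReal.add_lt_add_left hAne hBlt))

/-- Split lemma, part iii: if two distinct coalitions of an envy-free
feasible allocation both contain agents of type `x`, contain no agents of type `< x`,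
have equal size, and contain equally many type-`x` agents, then both coalitions
consist entirely of type-`x` agents. -/
theorem stmt5 (A : Finset ℕ) (xd : ℕ → ℝ) (hpos : ∀ a ∈ A, 0 < xd a)
    (k : ℕ) (q : Fin k → ℕ) (hq : ∀ i j : Fin k, i ≤ j → q j ≤ q i)
    (Tl : Fin k → Finset ℕ)
    (hpart : IsPartition A Tl) (hfeas : Feasible q Tl) (hef : EnvyFree xd q Tl)
    (i j : Fin k) (hij : i ≠ j) (x : ℝ) (a b : ℕ)
    (ha : a ∈ Tl i) (hb : b ∈ Tl j) (hax : xd a = x) (hbx : xd b = x)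
    (hlo1 : ∀ c ∈ Tl i, ¬ xd c < x) (hlo2 : ∀ c ∈ Tl j, ¬ xd c < x)
    (hcard : (Tl i).card = (Tl j).card)
    (hsplit : ((Tl i).filter fun c => xd c = x).card
              = ((Tl j).filter fun c => xd c = x).card) :
    (∀ c ∈ Tl i, xd c = x) ∧ (∀ c ∈ Tl j, xd c = x) := by
  have haA : a ∈ A := hpart.2 ▸ Finset.mem_biUnion.mpr ⟨i, Finset.mem_univ i, ha⟩
  have hx : 0 < x := hax ▸ hpos a haA
  have hlo1' : ∀ d ∈ Tl i, x ≤ xd d := fun d hd => not_lt.mp (hlo1 d hd)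
  have hlo2' : ∀ d ∈ Tl j, x ≤ xd d := fun d hd => not_lt.mp (hlo2 d hd)
  have hall : ∀ d, (d ∈ Tl i ∨ d ∈ Tl j) → xd d = x := by
    by_contra h
    push_neg at h
    obtain ⟨d0, hd0mem, hd0⟩ := h
    have hd0x : x < xd d0 := by
      rcases hd0mem with h1 | h1
      · exact lt_of_le_of_ne (hlo1' d0 h1) (Ne.symm hd0)
      · exact lt_of_le_of_ne (hlo2' d0 h1) (Ne.symm hd0)
    obtain ⟨c0, hc0U, hc0min⟩ :=
      ((Tl i ∪ Tl j).filter fun d => x < xd d).exists_min_image xd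
        ⟨d0, Finset.mem_filter.mpr ⟨Finset.mem_union.mpr hd0mem, hd0x⟩⟩
    have hc0 := Finset.mem_filter.mp hc0U
    have hmin' : ∀ d, (d ∈ Tl i ∨ d ∈ Tl j) → x < xd d → xd c0 ≤ xd d := fun d hd hx' =>
      hc0min d (Finset.mem_filter.mpr ⟨Finset.mem_union.mpr hd, hx'⟩)
    rcases Finset.mem_union.mp hc0.1 with h1 | h1
    · exact key_contra xd q Tl hpart.1 hfeas hef i j hij x hx b c0 hb hbx h1 hc0.2
        hlo1' hlo2' hmin' hcard hsplit
    · exact key_contra xd q Tl hpart.1 hfeas hef j i hij.symm x hx a c0 ha hax h1 hc0.2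
        hlo2' hlo1' (fun d hd => hmin' d hd.symm) hcard.symm hsplit.symm
  exact ⟨fun c hc => hall c (Or.inl hc), fun c hc => hall c (Or.inr hc)⟩
end

section
/- (Locality lemma) Let 𝒯 be an envy-free allocation, T ∈ 𝒯, and a ∈ T. Then φ(T, x_a) ≤ φ(T', x_a) for every T' ∈ 𝒯. Moreover, if x_a > min_{a'∈T'} x_{a'}, the inequality is strict. -/
open Finset MeasureTheory ENNReal

/-- Envy-freeness for an allocation (Shapley cost shares `phi`, no capacities). -/
def EnvyFreePhi (xd : ℕ → ℝ) {k : ℕ} (Tl : Fin k → Finset ℕ) : Prop :=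
  ∀ i j, i ≠ j → ∀ a ∈ Tl i, ∀ b ∈ Tl j,
    phi xd (Tl i) (xd a) ≤ phi xd ((Tl j).erase b ∪ {a}) (xd a)

/- ---------- auxiliary lemmas ---------- -/

lemma nT_measurable_s6 (xd : ℕ → ℝ) (T : Finset ℕ) :
    Measurable fun r => ((nT xd T r : ℝ≥0∞))⁻¹ := by
  apply Measurable.inv
  have h : (fun r => ((nT xd T r : ℝ≥0∞))) =
      fun r => ∑ b ∈ T, (Set.Iic (xd b)).indicator (fun _ => (1:ℝ≥0∞)) r := by
    funext r
    simp only [nT, Finset.card_filter]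
    push_cast
    refine Finset.sum_congr rfl fun b _ => ?_
    by_cases h : r ≤ xd b <;> simp [Set.indicator, Set.mem_Iic, h]
  rw [h]
  exact Finset.measurable_sum _ fun b _ =>
    (measurable_const.indicator measurableSet_Iic)

lemma nT_swap_ge (xd : ℕ → ℝ) (Tj : Finset ℕ) (a b : ℕ) (hb : b ∈ Tj) (ha : a ∉ Tj)
    {r : ℝ} (hr : r ≤ xd a) : nT xd Tj r ≤ nT xd (Tj.erase b ∪ {a}) r := by
  classical
  simp only [nT, Finset.filter_union]
  have hfa : ({a} : Finset ℕ).filter (fun c => r ≤ xd c) = {a} := by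
    simp [Finset.filter_singleton, hr]
  rw [hfa]
  have hdisj : Disjoint ((Tj.erase b).filter fun c => r ≤ xd c) ({a} : Finset ℕ) := by
    simp only [Finset.disjoint_singleton_right, Finset.mem_filter, Finset.mem_erase]
    exact fun h => ha h.1.2
  rw [Finset.card_union_of_disjoint hdisj, Finset.card_singleton]
  have hsub : Tj.filter (fun c => r ≤ xd c) ⊆
      insert b ((Tj.erase b).filter fun c => r ≤ xd c) := by
    intro x hx
    rcases Finset.mem_filter.mp hx with ⟨hx1, hx2⟩
    by_cases hxb : x = b
    · simp [hxb]
    · exact Finset.mem_insert_of_mem (Finset.mem_filter.mpr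
        ⟨Finset.mem_erase.mpr ⟨hxb, hx1⟩, hx2⟩)
  calc (Tj.filter fun c => r ≤ xd c).card
      ≤ (insert b ((Tj.erase b).filter fun c => r ≤ xd c)).card := Finset.card_le_card hsub
    _ ≤ ((Tj.erase b).filter fun c => r ≤ xd c).card + 1 := Finset.card_insert_le _ _

lemma nT_swap_succ (xd : ℕ → ℝ) (Tj : Finset ℕ) (a b : ℕ) (hb : b ∈ Tj) (ha : a ∉ Tj)
    {r : ℝ} (hr : r ≤ xd a) (hrb : xd b < r) :
    nT xd (Tj.erase b ∪ {a}) r = nT xd Tj r + 1 := by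
  classical
  simp only [nT, Finset.filter_union]
  have hfa : ({a} : Finset ℕ).filter (fun c => r ≤ xd c) = {a} := by
    simp [Finset.filter_singleton, hr]
  rw [hfa]
  have hdisj : Disjoint ((Tj.erase b).filter fun c => r ≤ xd c) ({a} : Finset ℕ) := by
    simp only [Finset.disjoint_singleton_right, Finset.mem_filter, Finset.mem_erase]
    exact fun h => ha h.1.2
  rw [Finset.card_union_of_disjoint hdisj, Finset.card_singleton]
  congr 2
  rw [Finset.filter_erase]
  apply Finset.erase_eq_of_notMem
  simp only [Finset.mem_filter, not_and]
  exact fun _ h => absurd h (not_le.mpr hrb)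

lemma phi_swap_le (xd : ℕ → ℝ) (Tj : Finset ℕ) (a b : ℕ) (hb : b ∈ Tj) (ha : a ∉ Tj) :
    phi xd (Tj.erase b ∪ {a}) (xd a) ≤ phi xd Tj (xd a) := by
  refine setLIntegral_mono (nT_measurable_s6 xd Tj) fun r hr => ?_
  exact ENNReal.inv_le_inv.mpr (by
    exact_mod_cast nT_swap_ge xd Tj a b hb ha hr.2)

lemma phi_le_of_mem (xd : ℕ → ℝ) (T : Finset ℕ) (a : ℕ) (ha : a ∈ T) :
    phi xd T (xd a) ≤ ENNReal.ofReal (xd a) := by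
  have h : ∀ r ∈ Set.Ioc (0:ℝ) (xd a), ((nT xd T r : ℝ≥0∞))⁻¹ ≤ 1 := by
    intro r hr
    have h1 : 1 ≤ nT xd T r :=
      Finset.card_pos.mpr ⟨a, Finset.mem_filter.mpr ⟨ha, hr.2⟩⟩
    rw [ENNReal.inv_le_one]
    exact_mod_cast h1
  calc phi xd T (xd a) ≤ ∫⁻ _ in Set.Ioc (0:ℝ) (xd a), 1 :=
        setLIntegral_mono measurable_const h
    _ = ENNReal.ofReal (xd a) := by
        rw [setLIntegral_const, one_mul, Real.volume_Ioc, sub_zero]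

/-- Locality lemma: in an envy-free allocation every agent rides a
coalition of minimum `phi`-cost for her destination; the inequality against any other
coalition whose first drop-off point is strictly before her destination is strict. -/
theorem stmt6 (A : Finset ℕ) (xd : ℕ → ℝ) (hpos : ∀ a ∈ A, 0 < xd a)
    (k : ℕ) (Tl : Fin k → Finset ℕ)
    (hdisj : ∀ i j, i ≠ j → Disjoint (Tl i) (Tl j))
    (hcover : Finset.univ.biUnion Tl = A)
    (hef : EnvyFreePhi xd Tl)
    (i : Fin k) (a : ℕ) (ha : a ∈ Tl i) :
    (∀ j, phi xd (Tl i) (xd a) ≤ phi xd (Tl j) (xd a)) ∧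
    (∀ j, j ≠ i → ∀ hj : (Tl j).Nonempty,
      (Tl j).inf' hj xd < xd a →
        phi xd (Tl i) (xd a) < phi xd (Tl j) (xd a)) := by
  classical
  have hsub : ∀ j, Tl j ⊆ A := fun j x hx =>
    hcover ▸ Finset.mem_biUnion.mpr ⟨j, Finset.mem_univ j, hx⟩
  have hxa : 0 < xd a := hpos a (hsub i ha)
  constructor
  · intro j
    by_cases hij : j = i
    · subst hij; exact le_refl _
    rcases (Tl j).eq_empty_or_nonempty with hje | ⟨b, hb⟩
    · -- empty coalition has infinite cost
      have : phi xd (Tl j) (xd a) = ⊤ := by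
        have h0 : ∀ r : ℝ, (nT xd (Tl j) r : ℝ≥0∞)⁻¹ = ⊤ := by
          intro r; simp [nT, hje]
        simp only [phi]
        rw [show (fun r => ((nT xd (Tl j) r : ℝ≥0∞))⁻¹) = fun _ => (⊤ : ℝ≥0∞) from
          funext h0]
        rw [setLIntegral_const, Real.volume_Ioc]
        rw [ENNReal.top_mul]
        simp only [ne_eq, ENNReal.ofReal_eq_zero, not_le, sub_zero]
        linarith
      rw [this]; exact le_top
    · have hanb : a ∉ Tl j :=
        fun h => (Finset.disjoint_left.mp (hdisj i j (Ne.symm hij)) ha) h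
      exact le_trans (hef i j (Ne.symm hij) a ha b hb) (phi_swap_le xd (Tl j) a b hb hanb)
  · intro j hji hj hmin
    have hanb : a ∉ Tl j :=
      fun h => (Finset.disjoint_left.mp (hdisj i j (Ne.symm hji)) ha) h
    obtain ⟨b, hb, hbeq⟩ := (Tl j).exists_mem_eq_inf' hj xd
    set m := (Tl j).inf' hj xd with hm
    have hmpos : 0 < m := by
      rw [hbeq] at hm ⊢
      exact hm ▸ hpos b (hsub j hb)
    -- phi of the swapped coalition is strictly less than phi (Tl j)
    have hstrict : phi xd ((Tl j).erase b ∪ {a}) (xd a) < phi xd (Tl j) (xd a) := by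
      set T' := (Tl j).erase b ∪ {a} with hT'
      have hsplit : Set.Ioc (0:ℝ) (xd a) = Set.Ioc 0 m ∪ Set.Ioc m (xd a) :=
        (Set.Ioc_union_Ioc_eq_Ioc hmpos.le hmin.le).symm
      have hdisjI : Disjoint (Set.Ioc (0:ℝ) m) (Set.Ioc m (xd a)) :=
        Set.Ioc_disjoint_Ioc_of_le le_rfl
      have haT' : a ∈ T' := Finset.mem_union_right _ (Finset.mem_singleton_self a)
      -- finiteness of ∫ over Ioc 0 m of the T'-integrand
      have hfin1 : ∫⁻ r in Set.Ioc (0:ℝ) m, ((nT xd T' r : ℝ≥0∞))⁻¹ ≠ ⊤ := by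
        have hle : ∀ r ∈ Set.Ioc (0:ℝ) m, ((nT xd T' r : ℝ≥0∞))⁻¹ ≤ 1 := by
          intro r hr
          have h1 : 1 ≤ nT xd T' r :=
            Finset.card_pos.mpr ⟨a, Finset.mem_filter.mpr ⟨haT', hr.2.trans hmin.le⟩⟩
          rw [ENNReal.inv_le_one]; exact_mod_cast h1
        have := setLIntegral_mono (μ := volume) measurable_const hle
        refine ne_top_of_le_ne_top ?_ this
        rw [setLIntegral_const, one_mul, Real.volume_Ioc]
        exact ENNReal.ofReal_ne_top
      have hfin2 : ∫⁻ r in Set.Ioc m (xd a), ((nT xd T' r : ℝ≥0∞))⁻¹ ≠ ⊤ := by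
        have hle : ∀ r ∈ Set.Ioc m (xd a), ((nT xd T' r : ℝ≥0∞))⁻¹ ≤ 1 := by
          intro r hr
          have h1 : 1 ≤ nT xd T' r :=
            Finset.card_pos.mpr ⟨a, Finset.mem_filter.mpr ⟨haT', hr.2⟩⟩
          rw [ENNReal.inv_le_one]; exact_mod_cast h1
        have := setLIntegral_mono (μ := volume) measurable_const hle
        refine ne_top_of_le_ne_top ?_ this
        rw [setLIntegral_const, one_mul, Real.volume_Ioc]
        exact ENNReal.ofReal_ne_top
      have h1 : ∫⁻ r in Set.Ioc (0:ℝ) m, ((nT xd T' r : ℝ≥0∞))⁻¹ ≤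
          ∫⁻ r in Set.Ioc (0:ℝ) m, ((nT xd (Tl j) r : ℝ≥0∞))⁻¹ := by
        refine setLIntegral_mono (nT_measurable_s6 xd (Tl j)) fun r hr => ?_
        exact ENNReal.inv_le_inv.mpr (by
          exact_mod_cast nT_swap_ge xd (Tl j) a b hb hanb (hr.2.trans hmin.le))
      have h2 : ∫⁻ r in Set.Ioc m (xd a), ((nT xd T' r : ℝ≥0∞))⁻¹ <
          ∫⁻ r in Set.Ioc m (xd a), ((nT xd (Tl j) r : ℝ≥0∞))⁻¹ := by
        refine setLIntegral_strict_mono measurableSet_Ioc ?_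
          (nT_measurable_s6 xd (Tl j)) hfin2 (Filter.Eventually.of_forall fun r hr => ?_)
        · rw [Real.volume_Ioc]
          simp only [ne_eq, ENNReal.ofReal_eq_zero, not_le]
          linarith
        · have hsucc : nT xd T' r = nT xd (Tl j) r + 1 :=
            nT_swap_succ xd (Tl j) a b hb hanb hr.2 (hbeq ▸ hr.1)
          rw [hsucc]
          have hlt : (nT xd (Tl j) r : ℝ≥0∞) < ((nT xd (Tl j) r + 1 : ℕ) : ℝ≥0∞) := by
            exact_mod_cast Nat.lt_succ_self _
          exact ENNReal.inv_lt_inv.mpr hlt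
      simp only [phi]
      rw [hsplit, lintegral_union measurableSet_Ioc hdisjI,
        lintegral_union measurableSet_Ioc hdisjI]
      exact ENNReal.add_lt_add_of_le_of_lt hfin1 h1 h2
    exact lt_of_le_of_lt (hef i j (Ne.symm hji) a ha b hb) hstrict
end

section
/- For any coalition T and x > 0 with n_T(x) > 0, φ(T, x) = ψ(T_{<x}, x, |T|), where ψ(S, x, μ) = ∫_0^x dr / (n_S(r) + μ − |S|). That is, the Shapley cost of a passenger dropping at point x depends only on the set of agents in T with destination < x and the total size of T. -/
open Finset MeasureTheory ENNReal

/-- `ψ(S, y, μ) = ∫_0^y dr / (n_S(r) + μ − |S|)`. -/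
noncomputable def psi (xd : ℕ → ℝ) (S : Finset ℕ) (y : ℝ) (μ : ℕ) : ℝ≥0∞ :=
  ∫⁻ r in Set.Ioc (0:ℝ) y, ((nT xd S r + μ - S.card : ℕ) : ℝ≥0∞)⁻¹

/-- the Shapley cost of a passenger dropping at `x` depends only on the
members with destination `< x` and the total coalition size:
`φ(T,x) = ψ(T_{<x}, x, |T|)`. -/
theorem stmt7 (xd : ℕ → ℝ) (T : Finset ℕ) (x : ℝ) (hx : 0 < x)
    (hn : 0 < nT xd T x) :
    phi xd T x = psi xd (T.filter fun a => xd a < x) x T.card := by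
  unfold phi psi
  apply setLIntegral_congr_fun measurableSet_Ioc
  intro r hr
  beta_reduce
  congr 2
  set S := T.filter fun a => xd a < x with hS
  have hsub : S.card ≤ T.card := Finset.card_filter_le _ _
  have hsplit : ((T.filter fun a => r ≤ xd a).filter fun a => xd a < x).card
      + ((T.filter fun a => r ≤ xd a).filter fun a => ¬ xd a < x).card
      = (T.filter fun a => r ≤ xd a).card :=
    Finset.card_filter_add_card_filter_not (fun a => xd a < x)
  have h1 : (T.filter fun a => r ≤ xd a).filter (fun a => xd a < x)
      = S.filter fun a => r ≤ xd a := by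
    rw [hS, Finset.filter_filter, Finset.filter_filter]
    simp [and_comm]
  have h2 : (T.filter fun a => r ≤ xd a).filter (fun a => ¬ xd a < x)
      = T.filter fun a => ¬ xd a < x := by
    rw [Finset.filter_filter]
    apply Finset.filter_congr
    intro a _
    constructor
    · tauto
    · intro h
      exact ⟨le_trans hr.2 (not_lt.mp h), h⟩
  have h3 : (T.filter fun a => ¬ xd a < x).card = T.card - S.card := by
    rw [hS, ← Finset.card_filter_add_card_filter_not (s := T) (fun a => xd a < x)]
    omega
  unfold nT
  rw [h1, h2, h3] at hsplit
  have hns : (S.filter fun a => r ≤ xd a).card ≤ S.card := Finset.card_filter_le _ _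
  omega
end

section
/- (Lemma about near-unanimous first drop-off) Let 𝒯 be an envy-free feasible allocation and T ∈ 𝒯 with |T_{=x}| = |T| − 1 where x = min_{a∈T} x_a. Then for any other T' ∈ 𝒯 with |T'| = |T|, either min_{a∈T'} x_a < x, or every agent of T' has destination exactly x. -/
open Finset MeasureTheory ENNReal

lemma nT_mono_inv (xd : ℕ → ℝ) (T : Finset ℕ) :
    Monotone (fun r => ((nT xd T r : ℝ≥0∞))⁻¹) := by
  intro r s hrs
  have : nT xd T s ≤ nT xd T r := by
    apply Finset.card_le_card
    intro a ha
    simp only [Finset.mem_filter] at ha ⊢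
    exact ⟨ha.1, hrs.trans ha.2⟩
  show ((nT xd T r : ℝ≥0∞))⁻¹ ≤ ((nT xd T s : ℝ≥0∞))⁻¹
  gcongr

lemma int_le (xd : ℕ → ℝ) (T : Finset ℕ) {a b : ℝ} {m : ℕ}
    (hk : ∀ r ∈ Set.Ioc a b, m ≤ nT xd T r) :
    ∫⁻ r in Set.Ioc a b, ((nT xd T r : ℝ≥0∞))⁻¹ ≤ (m : ℝ≥0∞)⁻¹ * ENNReal.ofReal (b - a) := by
  calc ∫⁻ r in Set.Ioc a b, ((nT xd T r : ℝ≥0∞))⁻¹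
      ≤ ∫⁻ _ in Set.Ioc a b, (m : ℝ≥0∞)⁻¹ := by
        apply setLIntegral_mono measurable_const
        intro r hr
        gcongr
        exact_mod_cast hk r hr
    _ = (m : ℝ≥0∞)⁻¹ * volume (Set.Ioc a b) := setLIntegral_const (Set.Ioc a b) _
    _ = _ := by rw [Real.volume_Ioc]

lemma int_ge (xd : ℕ → ℝ) (T : Finset ℕ) {a b : ℝ} {m : ℕ}
    (hk : ∀ r ∈ Set.Ioc a b, nT xd T r ≤ m) :
    (m : ℝ≥0∞)⁻¹ * ENNReal.ofReal (b - a) ≤ ∫⁻ r in Set.Ioc a b, ((nT xd T r : ℝ≥0∞))⁻¹ := by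
  calc (m : ℝ≥0∞)⁻¹ * ENNReal.ofReal (b - a)
      = ∫⁻ _ in Set.Ioc a b, (m : ℝ≥0∞)⁻¹ := by
        rw [setLIntegral_const (Set.Ioc a b) _, Real.volume_Ioc]
    _ ≤ ∫⁻ r in Set.Ioc a b, ((nT xd T r : ℝ≥0∞))⁻¹ := by
        apply setLIntegral_mono ((nT_mono_inv xd T).measurable)
        intro r hr
        gcongr
        exact_mod_cast hk r hr

lemma phi_split (xd : ℕ → ℝ) (T : Finset ℕ) {u v w : ℝ} (h1 : u ≤ v) (h2 : v ≤ w) :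
    ∫⁻ r in Set.Ioc u w, ((nT xd T r : ℝ≥0∞))⁻¹
      = (∫⁻ r in Set.Ioc u v, ((nT xd T r : ℝ≥0∞))⁻¹)
        + ∫⁻ r in Set.Ioc v w, ((nT xd T r : ℝ≥0∞))⁻¹ := by
  rw [← Set.Ioc_union_Ioc_eq_Ioc h1 h2,
    lintegral_union measurableSet_Ioc (Set.Ioc_disjoint_Ioc_of_le le_rfl)]

/-- if in an envy-free feasible allocation all but one member of a
coalition `T` drop off at its first drop-off point `x`, then any other coalition of the
same size either has its first drop-off point strictly before `x`, or consists solely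
of agents with destination `x`. -/
theorem stmt10 (A : Finset ℕ) (xd : ℕ → ℝ) (hpos : ∀ a ∈ A, 0 < xd a)
    (k : ℕ) (q : Fin k → ℕ) (hq : ∀ i j : Fin k, i ≤ j → q j ≤ q i)
    (Tl : Fin k → Finset ℕ)
    (hpart : IsPartition A Tl) (hfeas : Feasible q Tl) (hef : EnvyFree xd q Tl)
    (i : Fin k) (hi : (Tl i).Nonempty)
    (hsplit : ((Tl i).filter fun c => xd c = (Tl i).inf' hi xd).card
              = (Tl i).card - 1)
    (j : Fin k) (hij : j ≠ i) (hj : (Tl j).Nonempty)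
    (hcard : (Tl j).card = (Tl i).card) :
    (Tl j).inf' hj xd < (Tl i).inf' hi xd ∨
      ∀ c ∈ Tl j, xd c = (Tl i).inf' hi xd := by
  classical
  by_cases hlt : (Tl j).inf' hj xd < (Tl i).inf' hi xd
  · exact Or.inl hlt
  right
  push_neg at hlt
  set x := (Tl i).inf' hi xd with hxdef
  intro c hc
  by_contra hne
  have hxc : x ≤ xd c := hlt.trans (Finset.inf'_le xd hc)
  have hcx : x < xd c := lt_of_le_of_ne hxc (Ne.symm hne)
  have hTA : ∀ a ∈ Tl i, a ∈ A := by
    intro a ha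
    rw [← hpart.2]
    exact Finset.mem_biUnion.2 ⟨i, Finset.mem_univ i, ha⟩
  obtain ⟨a₀, ha₀T, ha₀x⟩ := Finset.exists_mem_eq_inf' hi xd
  have hx0 : 0 < x := by
    rw [hxdef, ha₀x]; exact hpos a₀ (hTA a₀ ha₀T)
  set n := (Tl i).card with hndef
  set F := (Tl i).filter (fun c => xd c = x) with hFdef
  have ha₀F : a₀ ∈ F := Finset.mem_filter.2 ⟨ha₀T, ha₀x.symm⟩
  have hFsub : F ⊆ Tl i := Finset.filter_subset _ _
  have hn2 : 2 ≤ n := by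
    have h1 : 1 ≤ F.card := Finset.card_pos.2 ⟨a₀, ha₀F⟩
    have h2 : F.card ≤ n := Finset.card_le_card hFsub
    omega
  have hsd : ((Tl i) \ F).card = 1 := by
    rw [Finset.card_sdiff_of_subset hFsub, hsplit]; omega
  obtain ⟨w, hw⟩ := Finset.card_eq_one.1 hsd
  have hwmem : w ∈ Tl i \ F := by rw [hw]; exact Finset.mem_singleton_self w
  have hwT : w ∈ Tl i := (Finset.mem_sdiff.1 hwmem).1
  have hwF : w ∉ F := (Finset.mem_sdiff.1 hwmem).2
  have hwx : x < xd w := by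
    refine lt_of_le_of_ne (Finset.inf'_le xd hwT) ?_
    intro h
    exact hwF (Finset.mem_filter.2 ⟨hwT, h.symm⟩)
  set y := xd w with hydef
  set m := min y (xd c) with hmdef
  have hxm : x < m := lt_min hwx hcx
  have hmy : m ≤ y := min_le_left _ _
  have hxy : x ≤ y := hwx.le
  -- pick b ∈ Tl j distinct from c
  obtain ⟨b, hbT', hbc⟩ := Finset.exists_mem_ne (by omega : 1 < (Tl j).card) c
  have hdisj : Disjoint (Tl j) (Tl i) := hpart.1 j i hij
  have hwj : w ∉ Tl j := Finset.disjoint_right.1 hdisj hwT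
  have hwc : w ≠ c := fun h => hwj (h ▸ hc)
  set S := (Tl j).erase b ∪ {w} with hSdef
  have hwE : w ∉ (Tl j).erase b := fun h => hwj (Finset.mem_of_mem_erase h)
  have hScard : S.card = n := by
    rw [hSdef, Finset.card_union_of_disjoint (Finset.disjoint_singleton_right.2 hwE),
      Finset.card_erase_of_mem hbT', Finset.card_singleton]
    have : 1 ≤ (Tl j).card := Finset.card_pos.2 ⟨b, hbT'⟩
    omega
  -- envy-freeness applied to w and b
  have hEF0 := hef i j (Ne.symm hij) w hwT b hbT'
  rw [taxiCost, taxiCost, if_pos (hfeas i), if_pos (show S.card ≤ q j by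
    rw [hScard, ← hcard]; exact hfeas j)] at hEF0
  have hEF : phi xd (Tl i) y ≤ phi xd S y := hEF0
  -- lower bound on phi (Tl i) y
  have hTn : ∀ r ∈ Set.Ioc (0:ℝ) x, nT xd (Tl i) r ≤ n :=
    fun r _ => Finset.card_le_card (Finset.filter_subset _ _)
  have hT1 : ∀ r ∈ Set.Ioc x y, nT xd (Tl i) r ≤ 1 := by
    intro r hr
    show ((Tl i).filter fun a => r ≤ xd a).card ≤ 1
    rw [← hsd]
    apply Finset.card_le_card
    intro a ha
    rw [Finset.mem_filter] at ha
    rw [Finset.mem_sdiff]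
    refine ⟨ha.1, ?_⟩
    rw [hFdef, Finset.mem_filter]
    rintro ⟨-, hax⟩
    exact absurd (hax ▸ ha.2) (not_le.2 hr.1)
  have hlow : (n:ℝ≥0∞)⁻¹ * ENNReal.ofReal (x - 0) + ENNReal.ofReal (y - x)
      ≤ phi xd (Tl i) y := by
    rw [phi, phi_split xd (Tl i) hx0.le hxy]
    have h2 := int_ge xd (Tl i) hT1
    simp only [Nat.cast_one, inv_one, one_mul] at h2
    exact add_le_add (int_ge xd (Tl i) hTn) h2
  -- upper bound on phi S y
  have hS0 : ∀ r ∈ Set.Ioc (0:ℝ) x, n ≤ nT xd S r := by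
    intro r hr
    have hsub : S ⊆ S.filter (fun a => r ≤ xd a) := by
      intro a ha
      refine Finset.mem_filter.2 ⟨ha, ?_⟩
      rcases Finset.mem_union.1 ha with h | h
      · have : x ≤ xd a :=
          hlt.trans (Finset.inf'_le xd (Finset.mem_of_mem_erase h))
        linarith [hr.2]
      · rw [Finset.mem_singleton.1 h]
        have := hr.2
        linarith
    calc n = S.card := hScard.symm
      _ ≤ (S.filter (fun a => r ≤ xd a)).card := Finset.card_le_card hsub
  have hwS : w ∈ S := Finset.mem_union.2 (Or.inr (Finset.mem_singleton_self w))
  have hcS : c ∈ S := Finset.mem_union.2 (Or.inl (Finset.mem_erase.2 ⟨hbc.symm, hc⟩))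
  have hS2 : ∀ r ∈ Set.Ioc x m, 2 ≤ nT xd S r := by
    intro r hr
    have hsub : ({w, c} : Finset ℕ) ⊆ S.filter (fun a => r ≤ xd a) := by
      intro a ha
      rcases Finset.mem_insert.1 ha with h | h
      · subst h
        exact Finset.mem_filter.2 ⟨hwS, le_trans (hr.2.trans hmy) le_rfl⟩
      · rw [Finset.mem_singleton.1 h]
        exact Finset.mem_filter.2 ⟨hcS, hr.2.trans (min_le_right _ _)⟩
    calc 2 = ({w, c} : Finset ℕ).card := (Finset.card_pair hwc).symm
      _ ≤ _ := Finset.card_le_card hsub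
  have hS1 : ∀ r ∈ Set.Ioc m y, 1 ≤ nT xd S r := by
    intro r hr
    exact Finset.card_pos.2 ⟨w, Finset.mem_filter.2 ⟨hwS, hr.2⟩⟩
  have hup : phi xd S y ≤ (n:ℝ≥0∞)⁻¹ * ENNReal.ofReal (x - 0)
      + ((2:ℝ≥0∞)⁻¹ * ENNReal.ofReal (m - x) + ENNReal.ofReal (y - m)) := by
    rw [phi, phi_split xd S hx0.le hxy, phi_split xd S hxm.le hmy]
    refine add_le_add (int_le xd S hS0) (add_le_add ?_ ?_)
    · have := int_le xd S hS2
      simpa using this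
    · have := int_le xd S hS1
      simpa using this
  -- the strict numeric inequality
  have key : (n:ℝ≥0∞)⁻¹ * ENNReal.ofReal (x - 0)
      + ((2:ℝ≥0∞)⁻¹ * ENNReal.ofReal (m - x) + ENNReal.ofReal (y - m))
      < (n:ℝ≥0∞)⁻¹ * ENNReal.ofReal (x - 0) + ENNReal.ofReal (y - x) := by
    apply ENNReal.add_lt_add_left
    · exact ENNReal.mul_ne_top
        (ENNReal.inv_ne_top.2 (by exact_mod_cast (show n ≠ 0 by omega)))
        ENNReal.ofReal_ne_top
    · have hsum : ENNReal.ofReal (y - x)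
          = ENNReal.ofReal (m - x) + ENNReal.ofReal (y - m) := by
        rw [← ENNReal.ofReal_add (by linarith) (by linarith)]
        ring_nf
      rw [hsum]
      apply ENNReal.add_lt_add_right ENNReal.ofReal_ne_top
      have ht0 : ENNReal.ofReal (m - x) ≠ 0 :=
        (ENNReal.ofReal_pos.2 (by linarith)).ne'
      calc (2:ℝ≥0∞)⁻¹ * ENNReal.ofReal (m - x)
          = ENNReal.ofReal (m - x) / 2 := by rw [div_eq_mul_inv, mul_comm]
        _ < ENNReal.ofReal (m - x) := ENNReal.half_lt_self ht0 ENNReal.ofReal_ne_top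
  exact absurd ((hlow.trans hEF).trans hup) (not_le.2 key)
end

section
/- (Backward greedy is strongly swap-stable) Let 𝒯 be the allocation produced by backward greedy (taxi 1 gets the q_1 furthest agents, taxi 2 the next q_2, etc., with q_1 ≥ … ≥ q_k). If a ∈ T_i, b ∈ T_j with i < j and φ(T_j − b + a, x_a) ≤ φ(T_i, x_a), then swapping a and b changes neither agent's cost: φ(T_j − b + a, x_a) = φ(T_i, x_a) and φ(T_i − a + b, x_b) = φ(T_j, x_b). In particular 𝒯 is strongly swap-stable. -/
open Finset MeasureTheory ENNReal

/-- Total capacity of taxis `1, …, i`. -/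
def cumQ (q : ℕ → ℕ) (i : ℕ) : ℕ := ∑ j ∈ Finset.Icc 1 i, q j

/-- The backward greedy allocation for agents `1, …, n` sorted nondecreasingly:
taxi `1` gets the `q 1` furthest agents, taxi `2` the next `q 2` furthest, etc. -/
def greedyT (n : ℕ) (q : ℕ → ℕ) (i : ℕ) : Finset ℕ :=
  Finset.Icc (max 1 (n + 1 - cumQ q i)) (n - cumQ q (i - 1))

section helpers

variable (x : ℕ → ℝ)

lemma finset_union_singleton (s : Finset ℕ) (a : ℕ) : s ∪ {a} = insert a s := by
  rw [Finset.union_comm, ← Finset.insert_eq]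

lemma nT_le_card (T : Finset ℕ) (r : ℝ) : nT x T r ≤ T.card :=
  Finset.card_filter_le _ _

lemma one_le_nT {T : Finset ℕ} {a : ℕ} {r : ℝ} (ha : a ∈ T) (h : r ≤ x a) : 1 ≤ nT x T r :=
  Finset.card_pos.mpr ⟨a, Finset.mem_filter.mpr ⟨ha, h⟩⟩

lemma nT_eq_card {T : Finset ℕ} {r : ℝ} (h : ∀ c ∈ T, r ≤ x c) : nT x T r = T.card := by
  unfold nT
  rw [Finset.filter_true_of_mem h]

lemma nT_insert {S : Finset ℕ} {a : ℕ} {r : ℝ} (haS : a ∉ S) (hra : r ≤ x a) :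
    nT x (insert a S) r = nT x S r + 1 := by
  unfold nT
  rw [Finset.filter_insert, if_pos hra,
    Finset.card_insert_of_notMem (fun h => haS (Finset.mem_of_mem_filter a h))]

lemma measurable_invnT (T : Finset ℕ) :
    Measurable fun r : ℝ => ((nT x T r : ℝ≥0∞))⁻¹ := by
  have hmono : Monotone fun r : ℝ => ((nT x T r : ℝ≥0∞))⁻¹ := by
    intro r r' h
    have hsub : T.filter (fun a => r' ≤ x a) ⊆ T.filter (fun a => r ≤ x a) := by
      intro c hc
      rw [Finset.mem_filter] at *
      exact ⟨hc.1, le_trans h hc.2⟩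
    have := Finset.card_le_card hsub
    exact ENNReal.inv_le_inv.mpr (by exact_mod_cast this)
  exact hmono.measurable

lemma nT_swap_le {A B : Finset ℕ} {a b : ℕ} (haA : a ∈ A) (hbB : b ∈ B) (haB : a ∉ B)
    (hcard : B.card ≤ A.card) (hle : ∀ u ∈ A, ∀ v ∈ B, x v ≤ x u)
    {r : ℝ} (hr : r ≤ x a) :
    nT x (B.erase b ∪ {a}) r ≤ nT x A r := by
  have haB' : a ∉ B.erase b := fun h => haB (Finset.mem_of_mem_erase h)
  rw [finset_union_singleton, nT_insert x haB' hr]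
  by_cases hm : ∃ c ∈ B.erase b, r ≤ x c
  · obtain ⟨c, hc, hrc⟩ := hm
    have hA : nT x A r = A.card := nT_eq_card x fun d hd =>
      le_trans hrc (hle d hd c (Finset.mem_of_mem_erase hc))
    have h1 : nT x (B.erase b) r ≤ (B.erase b).card := nT_le_card x _ _
    have h2 : (B.erase b).card = B.card - 1 := Finset.card_erase_of_mem hbB
    have h3 : 1 ≤ B.card := Finset.card_pos.mpr ⟨b, hbB⟩
    omega
  · have h0 : nT x (B.erase b) r = 0 := by
      apply Finset.card_eq_zero.mpr
      apply Finset.filter_eq_empty_iff.mpr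
      intro c hc hrc
      exact hm ⟨c, hc, hrc⟩
    rw [h0]
    exact one_le_nT x haA hr

lemma phi_mono_of_nT_le {S T : Finset ℕ} {y : ℝ}
    (h : ∀ r ∈ Set.Ioc (0:ℝ) y, nT x S r ≤ nT x T r) : phi x T y ≤ phi x S y := by
  apply lintegral_mono_ae
  refine (ae_restrict_iff' measurableSet_Ioc).2 (ae_of_all _ fun r hr => ?_)
  exact ENNReal.inv_le_inv.mpr (by exact_mod_cast h r hr)

lemma phi_ne_top {T : Finset ℕ} {a : ℕ} {y : ℝ} (ha : a ∈ T) (hy : y ≤ x a) :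
    phi x T y ≠ ⊤ := by
  have hb : phi x T y ≤ ∫⁻ _ in Set.Ioc (0:ℝ) y, 1 := by
    apply lintegral_mono_ae
    refine (ae_restrict_iff' measurableSet_Ioc).2 (ae_of_all _ fun r hr => ?_)
    have h1 : 1 ≤ nT x T r := one_le_nT x ha (hr.2.trans hy)
    exact ENNReal.inv_le_one.mpr (by exact_mod_cast h1)
  rw [setLIntegral_one] at hb
  have hfin : volume (Set.Ioc (0:ℝ) y) ≠ ⊤ := by simp [Real.volume_Ioc]
  exact ne_top_of_le_ne_top hfin hb

lemma ae_eq_of_lintegral_le {s : Set ℝ} (hs : MeasurableSet s) (f g : ℝ → ℝ≥0∞)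
    (hf : Measurable f) (hg : Measurable g)
    (hle : ∀ r ∈ s, f r ≤ g r)
    (hint : ∫⁻ r in s, g r ≤ ∫⁻ r in s, f r)
    (hfin : ∫⁻ r in s, f r ≠ ⊤) :
    ∀ᵐ r ∂(volume.restrict s), f r = g r := by
  have hle' : f ≤ᵐ[volume.restrict s] g := (ae_restrict_iff' hs).2 (ae_of_all _ hle)
  have hsub : ∫⁻ r in s, (g r - f r) = (∫⁻ r in s, g r) - ∫⁻ r in s, f r :=
    lintegral_sub hf hfin hle'
  have h0 : ∫⁻ r in s, (g r - f r) = 0 := by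
    rw [hsub]
    exact tsub_eq_zero_iff_le.mpr hint
  have hz := (lintegral_eq_zero_iff (hg.sub hf)).1 h0
  filter_upwards [hz, hle'] with r h1 h2
  have h1' : g r - f r = 0 := h1
  exact le_antisymm h2 (tsub_eq_zero_iff_le.mp h1')

lemma phi_key {A B : Finset ℕ} {a b : ℕ} (haA : a ∈ A) (hbB : b ∈ B) (haB : a ∉ B)
    (hcard : B.card ≤ A.card) (hle : ∀ u ∈ A, ∀ v ∈ B, x v ≤ x u) :
    phi x A (x a) ≤ phi x (B.erase b ∪ {a}) (x a) :=
  phi_mono_of_nT_le x fun _ hr => nT_swap_le x haA hbB haB hcard hle hr.2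

lemma phi_key2 {A B : Finset ℕ} {a b : ℕ} (haA : a ∈ A) (hbB : b ∈ B)
    (haB : a ∉ B) (hbA : b ∉ A)
    (hcard : B.card ≤ A.card) (hle : ∀ u ∈ A, ∀ v ∈ B, x v ≤ x u)
    (heq : phi x (B.erase b ∪ {a}) (x a) = phi x A (x a)) :
    phi x (A.erase a ∪ {b}) (x b) = phi x B (x b) := by
  set B' := B.erase b ∪ {a} with hB'
  have hba : x b ≤ x a := hle a haA b hbB
  have hae : ∀ᵐ r ∂(volume.restrict (Set.Ioc (0:ℝ) (x a))),
      ((nT x A r : ℝ≥0∞))⁻¹ = ((nT x B' r : ℝ≥0∞))⁻¹ := by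
    apply ae_eq_of_lintegral_le measurableSet_Ioc _ _ (measurable_invnT x A)
      (measurable_invnT x B')
    · intro r hr
      have h := nT_swap_le x haA hbB haB hcard hle hr.2
      exact ENNReal.inv_le_inv.mpr (by exact_mod_cast h)
    · exact le_of_eq heq
    · exact phi_ne_top x haA le_rfl
  have hae2 : ∀ᵐ r ∂(volume.restrict (Set.Ioc (0:ℝ) (x b))),
      ((nT x A r : ℝ≥0∞))⁻¹ = ((nT x B' r : ℝ≥0∞))⁻¹ :=
    ae_restrict_of_ae_restrict_of_subset (Set.Ioc_subset_Ioc_right hba) hae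
  have hS : ∀ r ∈ Set.Ioc (0:ℝ) (x b), nT x (A.erase a ∪ {b}) r = A.card := by
    intro r hr
    have h1 : nT x (A.erase a ∪ {b}) r = (A.erase a ∪ {b}).card := by
      apply nT_eq_card
      intro c hc
      rcases Finset.mem_union.mp hc with h | h
      · exact hr.2.trans (hle c (Finset.mem_of_mem_erase h) b hbB)
      · rw [Finset.mem_singleton] at h
        subst h
        exact hr.2
    rw [h1, finset_union_singleton,
      Finset.card_insert_of_notMem (fun h => hbA (Finset.mem_of_mem_erase h)),
      Finset.card_erase_of_mem haA]
    have h2 : 1 ≤ A.card := Finset.card_pos.mpr ⟨a, haA⟩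
    omega
  have hA : ∀ r ∈ Set.Ioc (0:ℝ) (x b), nT x A r = A.card := fun r hr =>
    nT_eq_card x fun c hc => hr.2.trans (hle c hc b hbB)
  have hBB' : ∀ r ∈ Set.Ioc (0:ℝ) (x b), nT x B' r = nT x B r := by
    intro r hr
    have hra : r ≤ x a := hr.2.trans hba
    have hnB : B = insert b (B.erase b) := (Finset.insert_erase hbB).symm
    rw [hB', finset_union_singleton,
      nT_insert x (fun h => haB (Finset.mem_of_mem_erase h)) hra]
    conv_rhs => rw [hnB]
    rw [nT_insert x (Finset.notMem_erase b B) hr.2]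
  calc phi x (A.erase a ∪ {b}) (x b)
      = ∫⁻ _ in Set.Ioc (0:ℝ) (x b), ((A.card : ℝ≥0∞))⁻¹ :=
        setLIntegral_congr_fun measurableSet_Ioc
          (fun r hr => by rw [hS r hr])
    _ = ∫⁻ r in Set.Ioc (0:ℝ) (x b), ((nT x A r : ℝ≥0∞))⁻¹ :=
        (setLIntegral_congr_fun measurableSet_Ioc
          (fun r hr => by rw [hA r hr])).symm
    _ = ∫⁻ r in Set.Ioc (0:ℝ) (x b), ((nT x B' r : ℝ≥0∞))⁻¹ := lintegral_congr_ae hae2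
    _ = phi x B (x b) :=
        setLIntegral_congr_fun measurableSet_Ioc
          (fun r hr => by rw [hBB' r hr])

end helpers

lemma cumQ_mono (q : ℕ → ℕ) : Monotone (cumQ q) := fun _ _ h =>
  Finset.sum_le_sum_of_subset (Finset.Icc_subset_Icc_right h)

lemma cumQ_succ (q : ℕ → ℕ) {i : ℕ} (hi : 1 ≤ i) : cumQ q i = cumQ q (i - 1) + q i := by
  obtain ⟨m, rfl⟩ : ∃ m, i = m + 1 := ⟨i - 1, by omega⟩
  show ∑ j ∈ Finset.Icc 1 (m + 1), q j = ∑ j ∈ Finset.Icc 1 (m + 1 - 1), q j + q (m + 1)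
  rw [Finset.sum_Icc_succ_top (by omega : 1 ≤ m + 1)]
  simp

lemma greedy_mem_bounds {n : ℕ} {q : ℕ → ℕ} {i a : ℕ} (ha : a ∈ greedyT n q i) :
    1 ≤ a ∧ n + 1 - cumQ q i ≤ a ∧ a ≤ n - cumQ q (i - 1) := by
  rw [greedyT, Finset.mem_Icc] at ha
  omega

lemma greedy_lt {n : ℕ} {q : ℕ → ℕ} {i j a t : ℕ} (hij : i < j)
    (ha : a ∈ greedyT n q i) (ht : t ∈ greedyT n q j) : t < a := by
  obtain ⟨_, ha2, _⟩ := greedy_mem_bounds ha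
  obtain ⟨ht1, _, ht3⟩ := greedy_mem_bounds ht
  have h := cumQ_mono q (show i ≤ j - 1 by omega)
  omega

lemma greedy_card_le {n k : ℕ} {q : ℕ → ℕ}
    (hq : ∀ i j, 1 ≤ i → i ≤ j → j ≤ k → q j ≤ q i) {i j : ℕ}
    (hi : 1 ≤ i) (hij : i < j) (hj : j ≤ k) :
    (greedyT n q j).card ≤ (greedyT n q i).card := by
  have hqq : q j ≤ q i := hq i j hi (le_of_lt hij) hj
  have h1 := cumQ_mono q (show i - 1 ≤ j - 1 by omega)
  have h2 := cumQ_succ q hi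
  have h3 := cumQ_succ q (le_trans hi (le_of_lt hij))
  simp only [greedyT, Nat.card_Icc]
  omega

/-- in the backward greedy allocation, if `a ∈ T_i`, `b ∈ T_j` with
`i < j` and `a` could (weakly) profitably replace `b`, then swapping `a` and `b`
changes neither agent's cost; in particular the allocation is strongly swap-stable. -/
theorem stmt14 (n k : ℕ) (x : ℕ → ℝ)
    (hpos : ∀ a ∈ Finset.Icc 1 n, 0 < x a)
    (hmono : ∀ a b, 1 ≤ a → a ≤ b → b ≤ n → x a ≤ x b)
    (q : ℕ → ℕ) (hq : ∀ i j, 1 ≤ i → i ≤ j → j ≤ k → q j ≤ q i)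
    (hfeas : n ≤ cumQ q k) :
    (∀ i j, 1 ≤ i → i < j → j ≤ k →
      ∀ a ∈ greedyT n q i, ∀ b ∈ greedyT n q j,
        phi x ((greedyT n q j).erase b ∪ {a}) (x a)
            ≤ phi x (greedyT n q i) (x a) →
          phi x ((greedyT n q j).erase b ∪ {a}) (x a)
              = phi x (greedyT n q i) (x a) ∧
          phi x ((greedyT n q i).erase a ∪ {b}) (x b)
              = phi x (greedyT n q j) (x b)) ∧
    ¬ ∃ i j a b, 1 ≤ i ∧ i ≤ k ∧ 1 ≤ j ∧ j ≤ k ∧ i ≠ j ∧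
        a ∈ greedyT n q i ∧ b ∈ greedyT n q j ∧
        phi x ((greedyT n q j).erase b ∪ {a}) (x a)
            < phi x (greedyT n q i) (x a) ∧
        phi x ((greedyT n q i).erase a ∪ {b}) (x b)
            ≤ phi x (greedyT n q j) (x b) := by
  have hmem : ∀ {i a : ℕ}, a ∈ greedyT n q i → 1 ≤ a ∧ a ≤ n := by
    intro i a ha
    obtain ⟨h1, _, h3⟩ := greedy_mem_bounds ha
    omega
  have core : ∀ i j, 1 ≤ i → i < j → j ≤ k →
      ∀ a ∈ greedyT n q i, ∀ b ∈ greedyT n q j,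
        phi x ((greedyT n q j).erase b ∪ {a}) (x a) ≤ phi x (greedyT n q i) (x a) →
        phi x ((greedyT n q j).erase b ∪ {a}) (x a) = phi x (greedyT n q i) (x a) ∧
        phi x ((greedyT n q i).erase a ∪ {b}) (x b) = phi x (greedyT n q j) (x b) := by
    intro i j hi hij hj a ha b hb hyp
    have haB : a ∉ greedyT n q j := fun h => lt_irrefl a (greedy_lt hij ha h)
    have hbA : b ∉ greedyT n q i := fun h => lt_irrefl b (greedy_lt hij h hb)
    have hcard := greedy_card_le (n := n) hq hi hij hj
    have hle : ∀ u ∈ greedyT n q i, ∀ v ∈ greedyT n q j, x v ≤ x u := by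
      intro u hu v hv
      have hlt := greedy_lt hij hu hv
      exact hmono v u (hmem hv).1 (le_of_lt hlt) (hmem hu).2
    have hkey := phi_key x ha hb haB hcard hle
    have heq := le_antisymm hyp hkey
    exact ⟨heq, phi_key2 x ha hb haB hbA hcard hle heq⟩
  refine ⟨core, ?_⟩
  rintro ⟨i, j, a, b, hi, hik, hj, hjk, hne, ha, hb, henv, hrep⟩
  rcases lt_or_gt_of_ne hne with hij | hji
  · exact absurd (core i j hi hij hjk a ha b hb (le_of_lt henv)).1 (ne_of_lt henv)
  · exact absurd (core j i hj hji hik b hb a ha hrep).2 (ne_of_lt henv)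
end
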